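/- Let X be a Banach space and Y a reflexive closed subspace of X. If x ∈ X with ‖x + Y‖_{X/Y} ≤ C, then the set G = {y ∈ Y : ‖x + y‖ ≤ C} is nonempty, convex, and weakly compact in Y. -/

import Mathlib

noncomputable section

open NormedSpace Metric Set Topology

/-- A Banach space is reflexive if the canonical inclusion into its double dual is surjective. -/
def IsReflexiveSpace (𝕜 X : Type*) [NontriviallyNormedField 𝕜] [NormedAddCommGroup X]
    [NormedSpace 𝕜 X] : Prop :=
  Function.Surjective (NormedSpace.inclusionInDoubleDual 𝕜 X)

/-- A convex norm-closed set is weakly closed. -/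
lemma aux_weakly_closed {Y : Type*} [NormedAddCommGroup Y] [NormedSpace ℂ Y] (S : Set Y)
    (hconv : Convex ℝ S) (hcl : IsClosed S) :
    IsClosed (show Set (WeakSpace ℂ Y) from S) := by
  rw [← isOpen_compl_iff, isOpen_iff_mem_nhds]
  intro z hz
  obtain ⟨f, u, hfz, hfS⟩ := RCLike.geometric_hahn_banach_point_closed (𝕜 := ℂ) hconv hcl hz
  have hfc : Continuous fun w : WeakSpace ℂ Y => f w := by
    exact WeakBilin.eval_continuous (topDualPairing ℂ Y).flip f
  have hcont : Continuous fun w : WeakSpace ℂ Y => Complex.re (f w) :=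
    Complex.continuous_re.comp hfc
  have : IsOpen {w : WeakSpace ℂ Y | Complex.re (f w) < u} :=
    isOpen_lt hcont continuous_const
  refine Filter.mem_of_superset (this.mem_nhds hfz) ?_
  intro w hw hwS
  exact absurd (hfS w hwS) (not_lt.2 hw.le)

/-- In a reflexive space, closed balls are weakly compact. -/
lemma aux_ball_weakly_compact {Y : Type*} [NormedAddCommGroup Y] [NormedSpace ℂ Y]
    (hY : IsReflexiveSpace ℂ Y) (r : ℝ) :
    IsCompact (show Set (WeakSpace ℂ Y) from {y : Y | ‖y‖ ≤ r}) := by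
  set e : WeakSpace ℂ Y → WeakDual ℂ (StrongDual ℂ Y) := fun y => inclusionInDoubleDual ℂ Y y with he
  have hind : IsInducing e := by
    constructor
    rw [show (instTopologicalSpaceWeakDual ℂ (StrongDual ℂ Y) : TopologicalSpace (WeakDual ℂ (StrongDual ℂ Y))) =
        TopologicalSpace.induced
          (fun (ψ : WeakDual ℂ (StrongDual ℂ Y)) (f : StrongDual ℂ Y) => topDualPairing ℂ (StrongDual ℂ Y) ψ f)
          Pi.topologicalSpace from rfl, induced_compose]
    rfl
  have himg : e '' {y : Y | ‖y‖ ≤ r} = WeakDual.toStrongDual ⁻¹' closedBall 0 r := by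
    ext ψ
    constructor
    · rintro ⟨y, hy, rfl⟩
      rw [mem_preimage, mem_closedBall_zero_iff (E := StrongDual ℂ (StrongDual ℂ Y))]
      exact ((inclusionInDoubleDualLi ℂ (E := Y)).norm_map y).le.trans hy
    · intro hψ
      obtain ⟨y, rfl⟩ := hY ψ
      refine ⟨y, ?_, rfl⟩
      have hψ : ‖inclusionInDoubleDualLi ℂ y‖ ≤ r := (mem_closedBall_zero_iff (E := StrongDual ℂ (StrongDual ℂ Y))).1 hψ
      show ‖y‖ ≤ r
      calc ‖y‖ = ‖inclusionInDoubleDualLi ℂ y‖ :=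
            ((inclusionInDoubleDualLi ℂ (E := Y)).norm_map y).symm
      _ ≤ r := hψ
  rw [hind.isCompact_iff, himg]
  exact WeakDual.isCompact_closedBall 0 r

/-- Convexity of the sets `{y ∈ Y : ‖x + y‖ ≤ C}`. -/
lemma aux_convex {X : Type*} [NormedAddCommGroup X] [NormedSpace ℂ X] (Y : Submodule ℂ X)
    (x : X) (C : ℝ) : Convex ℝ {y : Y | ‖x + (y : X)‖ ≤ C} := by
  intro y hy z hz a b ha hb hab
  simp only [mem_setOf_eq] at hy hz ⊢
  have hcoe : ((a • y + b • z : Y) : X) = a • (y : X) + b • (z : X) := by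
    push_cast [Submodule.coe_smul_of_tower]
    ring_nf
  have hx : x + (a • (y : X) + b • (z : X)) = a • (x + (y : X)) + b • (x + (z : X)) := by
    rw [smul_add, smul_add]
    conv_lhs => rw [show x = a • x + b • x by rw [← add_smul, hab, one_smul]]
    abel
  rw [hcoe, hx]
  calc ‖a • (x + (y : X)) + b • (x + (z : X))‖
      ≤ ‖a • (x + (y : X))‖ + ‖b • (x + (z : X))‖ := norm_add_le _ _
    _ = a * ‖x + (y : X)‖ + b * ‖x + (z : X)‖ := by
        rw [norm_smul, norm_smul, Real.norm_of_nonneg ha, Real.norm_of_nonneg hb]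
    _ ≤ a * C + b * C := add_le_add (mul_le_mul_of_nonneg_left hy ha)
        (mul_le_mul_of_nonneg_left hz hb)
    _ = C := by rw [← add_mul, hab, one_mul]

/-- Weak compactness (and weak closedness) of the sets `{y ∈ Y : ‖x + y‖ ≤ C}`. -/
lemma aux_compact {X : Type*} [NormedAddCommGroup X] [NormedSpace ℂ X] (Y : Submodule ℂ X)
    (hY : IsReflexiveSpace ℂ Y) (x : X) (C : ℝ) :
    IsCompact (show Set (WeakSpace ℂ Y) from {y : Y | ‖x + (y : X)‖ ≤ C}) ∧
      IsClosed (show Set (WeakSpace ℂ Y) from {y : Y | ‖x + (y : X)‖ ≤ C}) := by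
  have hcl : IsClosed {y : Y | ‖x + (y : X)‖ ≤ C} := by
    have hcont : Continuous fun y : Y => ‖x + (y : X)‖ :=
      (continuous_const.add continuous_subtype_val).norm
    exact isClosed_le hcont continuous_const
  have hclw : IsClosed (show Set (WeakSpace ℂ Y) from {y : Y | ‖x + (y : X)‖ ≤ C}) :=
    aux_weakly_closed _ (aux_convex Y x C) hcl
  refine ⟨?_, hclw⟩
  have hsub : {y : Y | ‖x + (y : X)‖ ≤ C} ⊆ {y : Y | ‖y‖ ≤ C + ‖x‖} := by
    intro y hy
    simp only [mem_setOf_eq] at hy ⊢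
    calc ‖y‖ = ‖(y : X)‖ := rfl
      _ = ‖(x + (y : X)) - x‖ := by rw [add_sub_cancel_left]
      _ ≤ ‖x + (y : X)‖ + ‖x‖ := norm_sub_le _ _
      _ ≤ C + ‖x‖ := add_le_add_left hy _
  exact (aux_ball_weakly_compact hY (C + ‖x‖)).of_isClosed_subset hclw hsub

/-- If `Y` is a reflexive closed subspace of a Banach space `X` and `‖x + Y‖ ≤ C`, then
`G = {y ∈ Y : ‖x + y‖ ≤ C}` is nonempty, convex and weakly compact in `Y`. -/
theorem quotient_ball_weakly_compact {X : Type*} [NormedAddCommGroup X] [NormedSpace ℂ X]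
    [CompleteSpace X] (Y : Submodule ℂ X) [IsClosed (Y : Set X)]
    (hY : IsReflexiveSpace ℂ Y) (x : X) (C : ℝ)
    (hC : ‖(Submodule.Quotient.mk x : X ⧸ Y)‖ ≤ C) :
    ({y : Y | ‖x + (y : X)‖ ≤ C}).Nonempty ∧
      Convex ℝ {y : Y | ‖x + (y : X)‖ ≤ C} ∧
      IsCompact (show Set (WeakSpace ℂ Y) from {y : Y | ‖x + (y : X)‖ ≤ C}) := by
  refine ⟨?_, aux_convex Y x C, (aux_compact Y hY x C).1⟩
  -- Nonemptiness via a directed intersection of weakly compact sets.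
  set K : ℕ → Set (WeakSpace ℂ Y) := fun n => {y : Y | ‖x + (y : X)‖ ≤ C + 1 / (n + 1)} with hK
  have hKanti : ∀ {m n : ℕ}, m ≤ n → K n ⊆ K m := by
    intro m n hmn y hy
    refine le_trans hy (add_le_add_right ?_ C)
    apply one_div_le_one_div_of_le
    · positivity
    · exact_mod_cast add_le_add_left (Nat.cast_le.2 hmn) 1
  have hdir : Directed (· ⊇ ·) K := fun m n =>
    ⟨max m n, hKanti (le_max_left m n), hKanti (le_max_right m n)⟩
  have hne : ∀ n : ℕ, (K n).Nonempty := by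
    intro n
    have hε : (0 : ℝ) < 1 / (n + 1) := by positivity
    obtain ⟨m, hm, hnorm⟩ :=
      Submodule.Quotient.norm_mk_lt (Submodule.Quotient.mk x : X ⧸ Y) hε
    have hmem : m - x ∈ Y := by
      rwa [Submodule.Quotient.eq] at hm
    refine ⟨⟨m - x, hmem⟩, ?_⟩
    show ‖x + (m - x)‖ ≤ C + 1 / (n + 1)
    rw [add_sub_cancel]
    exact hnorm.le.trans (add_le_add_left hC _)
  have hcompact : ∀ n : ℕ, IsCompact (K n) := fun n => (aux_compact Y hY x _).1
  have hclosed : ∀ n : ℕ, IsClosed (K n) := fun n => (aux_compact Y hY x _).2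
  obtain ⟨y, hy⟩ :=
    IsCompact.nonempty_iInter_of_directed_nonempty_isCompact_isClosed K hdir hne hcompact hclosed
  simp only [mem_iInter] at hy
  let z : Y := y
  refine ⟨z, ?_⟩
  show ‖x + (z : X)‖ ≤ C
  by_contra h
  push_neg at h
  obtain ⟨n, hn⟩ := exists_nat_one_div_lt (sub_pos.2 h)
  have h2 : ‖x + (z : X)‖ ≤ C + 1 / (n + 1) := hy n
  have : ‖x + (z : X)‖ < ‖x + (z : X)‖ := by
    calc ‖x + (z : X)‖ ≤ C + 1 / (n + 1) := h2
      _ < C + (‖x + (z : X)‖ - C) := by linarith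
      _ = ‖x + (z : X)‖ := by ring
  exact lt_irrefl _ this
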